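/- arXiv:2003.09748 — 2 statements merged into one kernel-verified Lean document; each statement's English description precedes it below -/
import Mathlib

section
/- Let 0 ≤ k ≤ m and let n_k denote the number of k-normal elements of E over F. If n_k > 0, i.e. if at least one k-normal element exists in E, then n_k ≥ Φ_q(X^m − 1)/q^k; equivalently, n_k · q^k ≥ card((F[X]/(X^m − 1))ˣ). -/
open Polynomial

set_option maxHeartbeats 1000000


/-- Let `E/F` be a degree-`m` extension of finite fields with `card F = q`,
and `0 ≤ k ≤ m`. Let `n_k` be the number of `k`-normal elements of `E` over `F`.
If `n_k > 0`, then `n_k ≥ Φ_q(X^m − 1)/q^k`, i.e.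
`n_k · q^k ≥ card ((F[X]/(X^m − 1))ˣ)`. -/
theorem card_kNormal_mul_q_pow_ge
    {F E : Type} [Field F] [Fintype F] [Field E] [Fintype E] [Algebra F E]
    (q m k : ℕ) (hF : Fintype.card F = q) (hm : Module.finrank F E = m) (hk : k ≤ m)
    (hpos : 0 < Nat.card {α : E // Module.finrank F
        ↥(Submodule.span F (Set.range fun i : Fin m => α ^ q ^ (i : ℕ))) = m - k}) :
    Nat.card {α : E // Module.finrank F
        ↥(Submodule.span F (Set.range fun i : Fin m => α ^ q ^ (i : ℕ))) = m - k} * q ^ k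
      ≥ Nat.card ((Polynomial F ⧸ Ideal.span {(Polynomial.X : Polynomial F) ^ m - 1})ˣ) := by
  classical
  have hm0 : 0 < m := hm ▸ Module.finrank_pos
  -- characteristic
  set p := ringChar F with hpdef
  haveI : CharP F p := ringChar.charP F
  obtain ⟨n, hp, hcard⟩ := FiniteField.card F p
  haveI : Fact p.Prime := ⟨hp⟩
  haveI : CharP E p := charP_of_injective_algebraMap (algebraMap F E).injective p
  have hq' : q = p ^ (n : ℕ) := by rw [← hF, hcard]
  -- the q-power Frobenius as an F-linear map
  let φ : Module.End F E :=
    { toFun := fun x => x ^ q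
      map_add' := fun x y => by rw [hq']; exact add_pow_char_pow x y p n
      map_smul' := fun c x => by
        simp only [Algebra.smul_def, mul_pow, RingHom.id_apply]
        congr 1
        rw [← map_pow, ← hF, FiniteField.pow_card] }
  have hφpow : ∀ (j : ℕ) (α : E), (φ ^ j) α = α ^ q ^ j := by
    intro j
    induction j with
    | zero => intro α; simp
    | succ j ih =>
      intro α
      rw [pow_succ, Module.End.mul_apply]
      show ((φ ^ j) (α ^ q)) = _
      rw [ih, ← pow_mul, ← pow_succ']
  have hcardE : Fintype.card E = q ^ m := by
    rw [Module.card_eq_pow_finrank (K := F) (V := E), hF, hm]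
  have hEpow : ∀ α : E, α ^ q ^ m = α := fun α => by
    rw [← hcardE]; exact FiniteField.pow_card α
  have hiter : ∀ (α : E) (t : ℕ), α ^ q ^ (m * t) = α := by
    intro α t
    induction t with
    | zero => simp
    | succ t ih => rw [Nat.mul_succ, pow_add, pow_mul, ih, hEpow]
  have hper : ∀ (α : E) (j : ℕ), α ^ q ^ j = α ^ q ^ (j % m) := by
    intro α j
    conv_lhs => rw [← Nat.div_add_mod j m]
    rw [pow_add, pow_mul, hiter]
  have hφm : φ ^ m = 1 := by
    ext α
    rw [hφpow, hEpow]; rfl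
  -- the quotient ring
  set f : F[X] := X ^ m - 1 with hfdef
  have h0 : aeval φ f = 0 := by
    rw [hfdef, map_sub, map_pow, aeval_X, map_one, hφm, sub_self]
  have hI : ∀ a : F[X], a ∈ Ideal.span {f} → aeval φ a = 0 := by
    intro a ha
    obtain ⟨c, rfl⟩ := Ideal.mem_span_singleton.mp ha
    rw [map_mul, h0, zero_mul]
  set Φ : (Polynomial F ⧸ Ideal.span {f}) →ₐ[F] Module.End F E :=
    Ideal.Quotient.liftₐ (Ideal.span {f}) (aeval φ) hI with hΦdef
  have hΦmk : ∀ g : F[X], Φ (Ideal.Quotient.mk (Ideal.span {f}) g) = aeval φ g := by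
    intro g
    rw [hΦdef, Ideal.Quotient.liftₐ_apply]
    rfl
  -- the evaluation linear maps
  let lmap : E → ((Polynomial F ⧸ Ideal.span {f}) →ₗ[F] E) := fun α =>
    { toFun := fun r => Φ r α
      map_add' := fun r s => by
        show Φ (r + s) α = Φ r α + Φ s α
        rw [map_add, LinearMap.add_apply]
      map_smul' := fun c r => by
        show Φ (c • r) α = c • Φ r α
        rw [map_smul, LinearMap.smul_apply] }
  have hlmap : ∀ (α : E) (r : Polynomial F ⧸ Ideal.span {f}), lmap α r = Φ r α := fun _ _ => rfl
  have hspan : ∀ α : E, LinearMap.range (lmap α)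
      = Submodule.span F (Set.range fun i : Fin m => α ^ q ^ (i : ℕ)) := by
    intro α
    apply le_antisymm
    · rintro x ⟨r, rfl⟩
      obtain ⟨g, rfl⟩ := Ideal.Quotient.mk_surjective (I := Ideal.span {f}) r
      rw [hlmap, hΦmk]
      rw [aeval_eq_sum_range (R := F)]
      rw [LinearMap.sum_apply]
      apply Submodule.sum_mem
      intro i _
      rw [LinearMap.smul_apply, hφpow, hper]
      apply Submodule.smul_mem
      apply Submodule.subset_span
      exact ⟨⟨i % m, Nat.mod_lt _ hm0⟩, rfl⟩
    · rw [Submodule.span_le]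
      rintro x ⟨i, rfl⟩
      refine ⟨Ideal.Quotient.mk (Ideal.span {f}) (X ^ (i : ℕ)), ?_⟩
      rw [hlmap, hΦmk, aeval_X_pow, hφpow]
  -- dimension of the quotient ring
  have hfm : f.Monic := by
    have := monic_X_pow_sub_C (1 : F) hm0.ne'
    rwa [map_one] at this
  have hf0 : f ≠ 0 := hfm.ne_zero
  have hfdeg : f.natDegree = m := by
    have := natDegree_X_pow_sub_C (n := m) (r := (1 : F))
    rwa [map_one] at this
  haveI : Module.Finite F (Polynomial F ⧸ Ideal.span {f}) :=
    Module.Finite.of_basis (AdjoinRoot.powerBasis hf0).basis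
  haveI : Finite (Polynomial F ⧸ Ideal.span {f}) := Module.finite_of_finite F
  have hfinrankR : Module.finrank F (Polynomial F ⧸ Ideal.span {f}) = m := by
    have h := (AdjoinRoot.powerBasis hf0).finrank
    rw [AdjoinRoot.powerBasis_dim, hfdeg] at h
    exact h
  -- pick a k-normal element
  obtain ⟨⟨α₀, hα₀⟩, -⟩ := Nat.card_pos_iff.mp hpos
  set S := {α : E // Module.finrank F
      ↥(Submodule.span F (Set.range fun i : Fin m => α ^ q ^ (i : ℕ))) = m - k} with hSdef
  set ℓ : (Polynomial F ⧸ Ideal.span {f}) →ₗ[F] E := lmap α₀ with hℓdef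
  have hrange : Module.finrank F (LinearMap.range ℓ) = m - k := by
    rw [hℓdef, hspan]; exact hα₀
  have hker : Module.finrank F (LinearMap.ker ℓ) = k := by
    have h1 := LinearMap.finrank_range_add_finrank_ker ℓ
    rw [hrange, hfinrankR] at h1
    omega
  haveI : Fintype (Polynomial F ⧸ Ideal.span {f}) := Fintype.ofFinite _
  have hkercard : Nat.card (LinearMap.ker ℓ) = q ^ k := by
    rw [Nat.card_eq_fintype_card, Module.card_eq_pow_finrank (K := F) (V := LinearMap.ker ℓ), hF, hker]
  -- the map from units to k-normal elements
  have hmem : ∀ u : (Polynomial F ⧸ Ideal.span {f})ˣ, Module.finrank F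
      ↥(Submodule.span F (Set.range fun i : Fin m => (Φ ↑u α₀) ^ q ^ (i : ℕ))) = m - k := by
    intro u
    rw [← hspan]
    have heq : LinearMap.range (lmap (Φ ↑u α₀)) = LinearMap.range (lmap α₀) := by
      apply le_antisymm
      · rintro x ⟨r, rfl⟩
        refine ⟨r * ↑u, ?_⟩
        rw [hlmap, hlmap, map_mul, Module.End.mul_apply]
      · rintro x ⟨r, rfl⟩
        refine ⟨r * ↑u⁻¹, ?_⟩
        rw [hlmap, hlmap, map_mul, Module.End.mul_apply]
        congr 1
        rw [← Module.End.mul_apply, ← map_mul, Units.inv_mul, map_one, Module.End.one_apply]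
    rw [heq, hspan]; exact hα₀
  let g : (Polynomial F ⧸ Ideal.span {f})ˣ → S := fun u => ⟨Φ ↑u α₀, hmem u⟩
  let pick : S → Polynomial F ⧸ Ideal.span {f} := fun s =>
    if h : ∃ v : (Polynomial F ⧸ Ideal.span {f})ˣ, g v = s then ↑h.choose else 0
  have hpickker : ∀ u : (Polynomial F ⧸ Ideal.span {f})ˣ,
      (↑u - pick (g u)) ∈ LinearMap.ker ℓ := by
    intro u
    have hex : ∃ v : (Polynomial F ⧸ Ideal.span {f})ˣ, g v = g u := ⟨u, rfl⟩
    have hc : g hex.choose = g u := hex.choose_spec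
    have hc' : Φ ↑hex.choose α₀ = Φ ↑u α₀ := congrArg Subtype.val hc
    show ℓ _ = 0
    rw [show pick (g u) = ↑hex.choose from dif_pos hex]
    rw [map_sub, hℓdef, hlmap, hlmap, hc', sub_self]
  let j : (Polynomial F ⧸ Ideal.span {f})ˣ → S × (LinearMap.ker ℓ) :=
    fun u => (g u, ⟨↑u - pick (g u), hpickker u⟩)
  have hjinj : Function.Injective j := by
    intro u v huv
    have h1 : g u = g v := congrArg Prod.fst huv
    have h2 : (↑u - pick (g u) : Polynomial F ⧸ Ideal.span {f}) = ↑v - pick (g v) :=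
      congrArg Subtype.val (congrArg Prod.snd huv)
    rw [h1] at h2
    exact Units.ext (by linear_combination (norm := abel) h2)
  calc Nat.card ((Polynomial F ⧸ Ideal.span {f})ˣ)
      ≤ Nat.card (S × (LinearMap.ker ℓ)) := Nat.card_le_card_of_injective j hjinj
    _ = Nat.card S * Nat.card (LinearMap.ker ℓ) := Nat.card_prod _ _
    _ = Nat.card S * q ^ k := by rw [hkercard]
end

section
/- Let 0 ≤ k ≤ m and let α ∈ E be k-normal over F. Then the number of polynomials f ∈ F[X] of degree less than m such that the residue class of f is a unit in F[X]/(X^m − 1) and f·α = α (where f·α = Σ_i f_i α^{q^i} for f = Σ_i f_i X^i) is at most q^k. -/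
/-- Let `E/F` be a degree-`m` extension of finite fields with `card F = q`,
`0 ≤ k ≤ m`, and let `α ∈ E` be `k`-normal over `F`. Then the number of polynomials
`f ∈ F[X]` of degree less than `m` whose residue class is a unit in `F[X]/(X^m − 1)`
and which satisfy `f·α = α` (where `f·α = Σ_i f_i α^{q^i}`) is at most `q^k`. -/
theorem card_stabilizer_le_q_pow
    {F E : Type} [Field F] [Fintype F] [Field E] [Fintype E] [Algebra F E]
    (q m k : ℕ) (hF : Fintype.card F = q) (hm : Module.finrank F E = m) (hk : k ≤ m)
    (α : E)
    (hα : Module.finrank F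
        ↥(Submodule.span F (Set.range fun i : Fin m => α ^ q ^ (i : ℕ))) = m - k) :
    Nat.card {f : Polynomial F //
        f.degree < (m : ℕ) ∧
        IsUnit (Ideal.Quotient.mk (Ideal.span {(Polynomial.X : Polynomial F) ^ m - 1}) f) ∧
        (f.sum fun i a => a • α ^ q ^ i) = α}
      ≤ q ^ k := by
  classical
  set v : Fin m → E := fun i => α ^ q ^ (i : ℕ) with hv
  set L : (Fin m → F) →ₗ[F] E := Fintype.linearCombination F v with hL
  -- Step 1: inject into the fiber of `L` over `α`.
  have hstep1 : Nat.card {f : Polynomial F //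
        f.degree < (m : ℕ) ∧
        IsUnit (Ideal.Quotient.mk (Ideal.span {(Polynomial.X : Polynomial F) ^ m - 1}) f) ∧
        (f.sum fun i a => a • α ^ q ^ i) = α} ≤ Nat.card {c : Fin m → F // L c = α} := by
    apply Nat.card_le_card_of_injective
      (fun f => ⟨fun i => f.1.coeff i, by
        have hdeg := f.2.1
        have hsum := f.2.2.2
        have := Polynomial.sum_fin (p := f.1) (fun i a => a • α ^ q ^ i)
          (by intro i; simp) hdeg
        simp only [hL, Fintype.linearCombination_apply, hv]
        rw [this, hsum]⟩)
    intro a b hab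
    have h := congrArg Subtype.val hab
    simp only at h
    apply Subtype.ext
    apply Polynomial.ext
    intro n
    by_cases hn : n < m
    · exact congrFun h ⟨n, hn⟩
    · rw [Polynomial.coeff_eq_zero_of_degree_lt
        (lt_of_lt_of_le a.2.1 (by exact_mod_cast Nat.cast_le.2 (le_of_not_gt hn))),
        Polynomial.coeff_eq_zero_of_degree_lt
        (lt_of_lt_of_le b.2.1 (by exact_mod_cast Nat.cast_le.2 (le_of_not_gt hn)))]
  -- Step 2: the fiber is at most as large as the kernel.
  have hstep2 : Nat.card {c : Fin m → F // L c = α} ≤ Nat.card (LinearMap.ker L) := by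
    rcases isEmpty_or_nonempty {c : Fin m → F // L c = α} with h | h
    · simp [Nat.card_of_isEmpty]
    · obtain ⟨⟨c0, hc0⟩⟩ := h
      apply Nat.card_le_card_of_injective
        (fun c => (⟨c.1 - c0, by
          simp [LinearMap.mem_ker, map_sub, c.2, hc0]⟩ : LinearMap.ker L))
      intro a b hab
      have h := congrArg Subtype.val hab
      simp only [sub_left_inj] at h
      exact Subtype.ext h
  -- Step 3: kernel has cardinality q ^ k.
  have hrange : LinearMap.range L = Submodule.span F (Set.range v) := by
    rw [hL, Fintype.range_linearCombination]
  have hrk : Module.finrank F (LinearMap.range L) = m - k := by rw [hrange]; exact hα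
  have hrn := LinearMap.finrank_range_add_finrank_ker L
  rw [Module.finrank_fin_fun, hrk] at hrn
  have hker : Module.finrank F (LinearMap.ker L) = k := by omega
  have hcard : Nat.card (LinearMap.ker L) = q ^ k := by
    rw [Nat.card_eq_fintype_card, Module.card_eq_pow_finrank (K := F), hF, hker]
  calc Nat.card {f : Polynomial F //
        f.degree < (m : ℕ) ∧
        IsUnit (Ideal.Quotient.mk (Ideal.span {(Polynomial.X : Polynomial F) ^ m - 1}) f) ∧
        (f.sum fun i a => a • α ^ q ^ i) = α}
      ≤ Nat.card {c : Fin m → F // L c = α} := hstep1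
    _ ≤ Nat.card (LinearMap.ker L) := hstep2
    _ = q ^ k := hcard
end
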